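/- Let φ : (−∞, u*] × [V₀, 1) → ℝ and r, Ω², ϖ be C¹ functions satisfying ∂_u ϖ = −(2 r² ∂_V r / Ω²)(∂_u φ)², with ∂_V r < 0, Ω² > 0, r ≥ r_min > 0 on the domain. Suppose there exist u₁ < u₀ < u₂ ≤ u* and a > 0 with liminf_{V→1} (∂_u φ)²(u,V) ≥ a for all u ∈ [u₁,u₂], and lim_{V→1} (−∂_V r/Ω²)(u,V) = +∞ for each u. If additionally ϖ(u₁, V) is bounded below uniformly in V, then limsup_{V→1} ϖ(u₂, V) = +∞. -/

import Mathlib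

open Filter MeasureTheory

/-- abstract mass inflation criterion. If
`∂_u ϖ = −(2 r² ∂_V r / Ω²)(∂_u φ)²` with `∂_V r < 0`, `Ω² > 0`,
`r ≥ r_min > 0`, if `liminf_{V→1⁻} (∂_u φ)² ≥ a > 0` on `[u₁,u₂]`,
`−∂_V r / Ω² → +∞` as `V → 1⁻`, and `ϖ(u₁,·)` is bounded below, then
`limsup_{V→1⁻} ϖ(u₂, V) = +∞`. -/
theorem mass_inflation_criterion (ustar V₀ rmin u₁ u₀ u₂ a : ℝ)
    (φ r Ωsq ϖ : ℝ → ℝ → ℝ)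
    (hV₀ : V₀ < 1) (hrmin : 0 < rmin)
    (hu₁ : u₁ < u₀) (hu₀ : u₀ < u₂) (hu₂ : u₂ ≤ ustar) (ha : 0 < a)
    (h_eq : ∀ u : ℝ, u ≤ ustar → ∀ V ∈ Set.Ico V₀ (1 : ℝ),
      HasDerivAt (fun u' => ϖ u' V)
        (-(2 * (r u V) ^ 2 * deriv (r u) V / Ωsq u V)
          * (deriv (fun u' => φ u' V) u) ^ 2) u)
    (h_dVr_neg : ∀ u : ℝ, u ≤ ustar → ∀ V ∈ Set.Ico V₀ (1 : ℝ), deriv (r u) V < 0)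
    (hΩ_pos : ∀ u : ℝ, u ≤ ustar → ∀ V ∈ Set.Ico V₀ (1 : ℝ), 0 < Ωsq u V)
    (hr_ge : ∀ u : ℝ, u ≤ ustar → ∀ V ∈ Set.Ico V₀ (1 : ℝ), rmin ≤ r u V)
    (h_liminf : ∀ u ∈ Set.Icc u₁ u₂,
      a ≤ Filter.liminf (fun V => (deriv (fun u' => φ u' V) u) ^ 2)
        (nhdsWithin 1 (Set.Iio 1)))
    (h_blowup : ∀ u : ℝ, u ≤ ustar →
      Tendsto (fun V => -deriv (r u) V / Ωsq u V)
        (nhdsWithin 1 (Set.Iio 1)) atTop)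
    (h_bdd_below : ∃ m : ℝ, ∀ V ∈ Set.Ico V₀ (1 : ℝ), m ≤ ϖ u₁ V) :
    ∀ M : ℝ, ∃ᶠ V in nhdsWithin 1 (Set.Iio 1), M ≤ ϖ u₂ V := by
  obtain ⟨m, hm⟩ := h_bdd_below
  intro M
  by_contra hcon
  rw [Filter.not_frequently] at hcon
  set l := nhdsWithin (1 : ℝ) (Set.Iio 1) with hldef
  haveI : l.NeBot := by rw [hldef]; infer_instance
  have hdu : (0 : ℝ) < u₂ - u₁ := by linarith
  set N : ℝ := max ((M - m + 1) / (u₂ - u₁)) 1 with hNdef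
  have hN1 : (1 : ℝ) ≤ N := le_max_right _ _
  have hN0 : (0 : ℝ) < N := by linarith
  have hNd : M - m + 1 ≤ N * (u₂ - u₁) := by
    calc M - m + 1 = ((M - m + 1) / (u₂ - u₁)) * (u₂ - u₁) := by field_simp
    _ ≤ N * (u₂ - u₁) := by
        have := le_max_left ((M - m + 1) / (u₂ - u₁)) 1
        nlinarith
  set g : ℝ → ℝ → ℝ := fun V u => deriv (fun u' => ϖ u' V) u with hgdef
  -- eventually V in the domain
  have heV : ∀ᶠ V in l, V ∈ Set.Ico V₀ (1 : ℝ) := by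
    have h1 : ∀ᶠ V in l, V < 1 := eventually_mem_nhdsWithin
    have h2 : ∀ᶠ V in l, V₀ < V := (eventually_gt_nhds hV₀).filter_mono nhdsWithin_le_nhds
    filter_upwards [h1, h2] with V hV1 hV2
    exact ⟨hV2.le, hV1⟩
  -- pointwise blow-up of the derivative in u
  have key : ∀ u ∈ Set.Icc u₁ u₂, Tendsto (fun V => g V u) l atTop := by
    intro u hu
    have hust : u ≤ ustar := hu.2.trans hu₂
    have hK : Tendsto (fun V => -deriv (r u) V / Ωsq u V) l atTop := h_blowup u hust
    have hsbdd : l.IsBoundedUnder (· ≥ ·)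
        (fun V => (deriv (fun u' => φ u' V) u) ^ 2) :=
      ⟨0, eventually_map.mpr (Eventually.of_forall fun V => sq_nonneg _)⟩
    have hs : ∀ᶠ V in l, a / 2 < (deriv (fun u' => φ u' V) u) ^ 2 :=
      eventually_lt_of_lt_liminf (lt_of_lt_of_le (by linarith) (h_liminf u hu)) hsbdd
    have hmono : ∀ᶠ V in l,
        rmin ^ 2 * a * (-deriv (r u) V / Ωsq u V) ≤ g V u := by
      filter_upwards [heV, hs, hK.eventually_ge_atTop 0] with V hV hsV hKV
      have hderiv := h_eq u hust V hV
      have hgV : g V u = -(2 * (r u V) ^ 2 * deriv (r u) V / Ωsq u V)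
          * (deriv (fun u' => φ u' V) u) ^ 2 := hderiv.deriv
      rw [hgV]
      have hΩ := hΩ_pos u hust V hV
      have hr := hr_ge u hust V hV
      have hrr : rmin ^ 2 ≤ (r u V) ^ 2 := by nlinarith
      have heq2 : -(2 * (r u V) ^ 2 * deriv (r u) V / Ωsq u V)
          = 2 * (r u V) ^ 2 * (-deriv (r u) V / Ωsq u V) := by
        field_simp
      rw [heq2]
      set K := -deriv (r u) V / Ωsq u V
      set s := (deriv (fun u' => φ u' V) u) ^ 2
      have h1 : rmin ^ 2 * a ≤ 2 * (r u V) ^ 2 * s := by nlinarith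
      calc rmin ^ 2 * a * K ≤ 2 * (r u V) ^ 2 * s * K :=
            mul_le_mul_of_nonneg_right h1 hKV
        _ = 2 * (r u V) ^ 2 * K * s := by ring
    exact tendsto_atTop_mono' l hmono (hK.const_mul_atTop (by positivity))
  -- choose a sequence tending to the filter
  obtain ⟨V, hVtend⟩ := Filter.exists_seq_tendsto l
  -- dominated convergence for the truncated derivative
  set F : ℕ → ℝ → ℝ := fun n u => min (max (g (V n) u) 0) N with hFdef
  have hFmeas : ∀ n, AEStronglyMeasurable (F n)
      (volume.restrict (Set.Ioc u₁ u₂)) := by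
    intro n
    exact (((measurable_deriv _).max measurable_const).min
      measurable_const).aestronglyMeasurable
  have hFbdd : ∀ n, ∀ᵐ u ∂(volume.restrict (Set.Ioc u₁ u₂)), ‖F n u‖ ≤ N := by
    intro n
    refine Eventually.of_forall fun u => ?_
    rw [Real.norm_eq_abs, abs_le]
    constructor
    · have : (0 : ℝ) ≤ min (max (g (V n) u) 0) N := le_min (le_max_right _ _) hN0.le
      linarith
    · exact min_le_right _ _
  have hFlim : ∀ᵐ u ∂(volume.restrict (Set.Ioc u₁ u₂)),
      Tendsto (fun n => F n u) atTop (nhds N) := by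
    filter_upwards [ae_restrict_mem measurableSet_Ioc] with u hu
    have hu' : u ∈ Set.Icc u₁ u₂ := ⟨hu.1.le, hu.2⟩
    have htend : Tendsto (fun n => g (V n) u) atTop atTop :=
      (key u hu').comp hVtend
    have : ∀ᶠ n in atTop, F n u = N := by
      filter_upwards [htend.eventually_ge_atTop N] with n hn
      have : N ≤ max (g (V n) u) 0 := le_trans hn (le_max_left _ _)
      simp [hFdef, min_eq_right this]
    exact Tendsto.congr' (this.mono fun n hn => hn.symm) tendsto_const_nhds
  have hDCT : Tendsto (fun n => ∫ u in Set.Ioc u₁ u₂, F n u) atTop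
      (nhds (∫ _u in Set.Ioc u₁ u₂, N)) :=
    tendsto_integral_of_dominated_convergence (fun _ => N) hFmeas
      (integrable_const N) hFbdd hFlim
  have hconst : (∫ _u in Set.Ioc u₁ u₂, N) = (u₂ - u₁) * N := by
    rw [setIntegral_const, measureReal_def, Real.volume_Ioc, smul_eq_mul,
      ENNReal.toReal_ofReal hdu.le]
  have hIlarge : ∀ᶠ n in atTop, M - m < ∫ u in Set.Ioc u₁ u₂, F n u := by
    rw [hconst] at hDCT
    exact hDCT.eventually (eventually_gt_nhds (by nlinarith))
  -- combine all eventual statements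
  have hmem : ∀ᶠ n in atTop, V n ∈ Set.Ico V₀ (1 : ℝ) := hVtend.eventually heV
  have hsmall : ∀ᶠ n in atTop, ¬ M ≤ ϖ u₂ (V n) := hVtend.eventually hcon
  obtain ⟨n, hnI, hnmem, hnsmall⟩ := (hIlarge.and (hmem.and hsmall)).exists
  -- the fundamental theorem of calculus inequality
  have hgval : ∀ x, x ≤ ustar → g (V n) x =
      -(2 * (r x (V n)) ^ 2 * deriv (r x) (V n) / Ωsq x (V n))
        * (deriv (fun u' => φ u' (V n)) x) ^ 2 :=
    fun x hx => (h_eq x hx (V n) hnmem).deriv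
  have hgnonneg : ∀ x ∈ Set.Icc u₁ u₂, 0 ≤ g (V n) x := by
    intro x hx
    have hxu : x ≤ ustar := hx.2.trans hu₂
    rw [hgval x hxu]
    have hΩ := hΩ_pos x hxu (V n) hnmem
    have hdr := h_dVr_neg x hxu (V n) hnmem
    have h1 : 0 ≤ -(2 * (r x (V n)) ^ 2 * deriv (r x) (V n)) := by nlinarith [sq_nonneg (r x (V n))]
    have h2 : 0 ≤ -(2 * (r x (V n)) ^ 2 * deriv (r x) (V n) / Ωsq x (V n)) := by
      rw [← neg_div]
      exact div_nonneg h1 hΩ.le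
    positivity
  have hcontϖ : ContinuousOn (fun u => ϖ u (V n)) (Set.Icc u₁ u₂) := by
    intro x hx
    exact ((h_eq x (hx.2.trans hu₂) (V n) hnmem).continuousAt).continuousWithinAt
  have hFTC : (∫ y in u₁..u₂, F n y) ≤ ϖ u₂ (V n) - ϖ u₁ (V n) := by
    apply intervalIntegral.integral_le_sub_of_hasDeriv_right_of_le (by linarith) hcontϖ
      (g' := g (V n)) (φ := F n)
    · intro x hx
      have hxu : x ≤ ustar := hx.2.le.trans hu₂
      have hd := h_eq x hxu (V n) hnmem
      have : g (V n) x = _ := hd.deriv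
      rw [this]
      exact hd.hasDerivWithinAt
    · apply Measure.integrableOn_of_bounded (M := N)
      · simp [Real.volume_Icc]
      · exact (((measurable_deriv _).max measurable_const).min
          measurable_const).aestronglyMeasurable
      · refine Eventually.of_forall fun u => ?_
        rw [Real.norm_eq_abs, abs_le]
        exact ⟨by have : (0:ℝ) ≤ min (max (g (V n) u) 0) N :=
            le_min (le_max_right _ _) hN0.le; linarith, min_le_right _ _⟩
    · intro x hx
      have hg0 := hgnonneg x ⟨hx.1.le, hx.2.le⟩
      calc F n x ≤ max (g (V n) x) 0 := min_le_left _ _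
        _ = g (V n) x := max_eq_left hg0
  rw [intervalIntegral.integral_of_le (by linarith : u₁ ≤ u₂)] at hFTC
  have := hm (V n) hnmem
  have : M ≤ ϖ u₂ (V n) := by linarith
  exact hnsmall this
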